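/- Let f : H → ℝ be convex and differentiable, attaining its minimum value f* at some point x* ∈ H. Let α0 > 0, t0 > 0, ξ2 > 0, ξ1 ≥ 0, ν1 = (ξ1 + 1)/ξ2 and ν2 = ξ1/ξ2 + 2. Let x : [t0,∞) → H be three times differentiable and satisfy x'''(t) + (ν2/t)x''(t) + (ν1/t²)x'(t) = −α0 ∇f(x(t) + ξ1 t x'(t) + ξ2 t² x''(t)) for all t ≥ t0. Then there exists a constant C > 0 such that f(x(t) + ξ1 t x'(t) + ξ2 t² x''(t)) − f* ≤ C/t³ for all t ≥ t0. -/

import Mathlib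

open InnerProductSpace

lemma grad_ineq
    {H : Type*} [NormedAddCommGroup H] [InnerProductSpace ℝ H] [CompleteSpace H]
    (f : H → ℝ) (hconv : ConvexOn ℝ Set.univ f) (hdiff : Differentiable ℝ f)
    (w z : H) : f w + ⟪gradient f w, z - w⟫_ℝ ≤ f z := by
  set φ : ℝ → H := fun s => w + s • (z - w) with hφ
  have hφconv : ConvexOn ℝ Set.univ (f ∘ φ) := by
    have := hconv.comp_affineMap (AffineMap.lineMap w z : ℝ →ᵃ[ℝ] H)
    have heq : (f ∘ (AffineMap.lineMap w z : ℝ →ᵃ[ℝ] H)) = f ∘ φ := by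
      funext s; simp [hφ, AffineMap.lineMap_apply, add_comm]
    rw [heq] at this
    simpa using this
  have hc : HasDerivAt φ (z - w) 0 := by
    simpa [hφ] using ((hasDerivAt_id (0:ℝ)).smul_const (z - w)).const_add w
  have hfd : HasFDerivAt f (toDual ℝ H (gradient f w)) w :=
    (hasGradientAt_iff_hasFDerivAt.mp (hdiff w).hasGradientAt)
  have hder : HasDerivAt (f ∘ φ) (⟪gradient f w, z - w⟫_ℝ) 0 := by
    have h0 : φ 0 = w := by simp [hφ]
    have hfd' : HasFDerivAt f (toDual ℝ H (gradient f w)) (φ 0) := by rw [h0]; exact hfd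
    have h := hfd'.comp_hasDerivAt (0:ℝ) hc
    simpa [toDual_apply_apply, Function.comp, h0] using h
  have := hφconv.le_slope_of_hasDerivAt (Set.mem_univ (0:ℝ)) (Set.mem_univ (1:ℝ))
    one_pos hder
  rw [slope_def_field] at this
  simp [hφ] at this
  linarith [show ⟪gradient f w, z - w⟫_ℝ = fderiv ℝ f w z - fderiv ℝ f w w by simp [map_sub]]

theorem stmt13
    {H : Type*} [NormedAddCommGroup H] [InnerProductSpace ℝ H] [CompleteSpace H]
    (f : H → ℝ) (hconv : ConvexOn ℝ Set.univ f) (hdiff : Differentiable ℝ f)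
    (xs : H) (hmin : ∀ z : H, f xs ≤ f z)
    (α0 t0 ξ1 ξ2 ν1 ν2 : ℝ) (hα0 : 0 < α0) (ht0 : 0 < t0)
    (hξ2 : 0 < ξ2) (hξ1 : 0 ≤ ξ1)
    (hν1 : ν1 = (ξ1 + 1) / ξ2) (hν2 : ν2 = ξ1 / ξ2 + 2)
    (x : ℝ → H)
    (hx1 : ∀ t, t0 ≤ t → DifferentiableAt ℝ x t)
    (hx2 : ∀ t, t0 ≤ t → DifferentiableAt ℝ (deriv x) t)
    (hx3 : ∀ t, t0 ≤ t → DifferentiableAt ℝ (deriv (deriv x)) t)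
    (hode : ∀ t, t0 ≤ t →
      deriv (deriv (deriv x)) t + (ν2 / t) • deriv (deriv x) t +
        (ν1 / t ^ 2) • deriv x t =
      -(α0 • gradient f (x t + (ξ1 * t) • deriv x t + (ξ2 * t ^ 2) • deriv (deriv x) t))) :
    ∃ C : ℝ, 0 < C ∧ ∀ t, t0 ≤ t →
      f (x t + (ξ1 * t) • deriv x t + (ξ2 * t ^ 2) • deriv (deriv x) t) - f xs ≤
        C / t ^ 3 := by
  set y : ℝ → H := fun t => x t + (ξ1 * t) • deriv x t + (ξ2 * t ^ 2) • deriv (deriv x) t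
    with hy
  set κ : ℝ := α0 * ξ2 with hκ
  have hκpos : 0 < κ := mul_pos hα0 hξ2
  -- derivative of y
  have hy' : ∀ t, t0 ≤ t → HasDerivAt y (-((κ * t ^ 2) • gradient f (y t))) t := by
    intro t ht
    have htpos : 0 < t := lt_of_lt_of_le ht0 ht
    have h1 : HasDerivAt x (deriv x t) t := (hx1 t ht).hasDerivAt
    have h2 : HasDerivAt (deriv x) (deriv (deriv x) t) t := (hx2 t ht).hasDerivAt
    have h3 : HasDerivAt (deriv (deriv x)) (deriv (deriv (deriv x)) t) t :=
      (hx3 t ht).hasDerivAt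
    have hc1 : HasDerivAt (fun s : ℝ => ξ1 * s) ξ1 t := by
      simpa using (hasDerivAt_id t).const_mul ξ1
    have hc2 : HasDerivAt (fun s : ℝ => ξ2 * s ^ 2) (ξ2 * (2 * t)) t := by
      simpa [mul_comm] using (hasDerivAt_pow 2 t).const_mul ξ2
    have hg : HasDerivAt (fun s => (ξ1 * s) • deriv x s)
        ((ξ1 * t) • deriv (deriv x) t + ξ1 • deriv x t) t := hc1.smul h2
    have hh : HasDerivAt (fun s => (ξ2 * s ^ 2) • deriv (deriv x) s)
        ((ξ2 * t ^ 2) • deriv (deriv (deriv x)) t + (ξ2 * (2 * t)) • deriv (deriv x) t) t :=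
      hc2.smul h3
    have htot := (h1.add hg).add hh
    have hsub : deriv (deriv (deriv x)) t =
        -(α0 • gradient f (y t)) - (ν2 / t) • deriv (deriv x) t
          - (ν1 / t ^ 2) • deriv x t := by
      have h := hode t ht
      simp only [hy]
      linear_combination (norm := module) h
    have heq : deriv x t + ((ξ1 * t) • deriv (deriv x) t + ξ1 • deriv x t) +
        ((ξ2 * t ^ 2) • deriv (deriv (deriv x)) t + (ξ2 * (2 * t)) • deriv (deriv x) t) =
        -((κ * t ^ 2) • gradient f (y t)) := by
      rw [hsub]
      have ht' : t ≠ 0 := ne_of_gt htpos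
      have hξ2' : ξ2 ≠ 0 := ne_of_gt hξ2
      rw [hν1, hν2, hκ]
      match_scalars
      · field_simp
        ring
      · field_simp
        ring
      · ring
    rw [heq] at htot
    exact htot
  -- energy function
  set g : ℝ → H := fun t => gradient f (y t) with hg
  set E : ℝ → ℝ := fun t => (κ / 3) * t ^ 3 * (f (y t) - f xs)
      + (1 / 2) * ⟪y t - xs, y t - xs⟫_ℝ with hE
  have hEderiv : ∀ t, t0 ≤ t → HasDerivAt E
      ((κ * t ^ 2) * (f (y t) - f xs)
        + (κ / 3) * t ^ 3 * ⟪g t, -((κ * t ^ 2) • g t)⟫_ℝ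
        + ⟪y t - xs, -((κ * t ^ 2) • g t)⟫_ℝ) t := by
    intro t ht
    have hyd := hy' t ht
    have hfd : HasFDerivAt f (toDual ℝ H (g t)) (y t) :=
      hasGradientAt_iff_hasFDerivAt.mp (hdiff (y t)).hasGradientAt
    have hF : HasDerivAt (fun s => f (y s)) (⟪g t, -((κ * t ^ 2) • g t)⟫_ℝ) t := by
      have h := hfd.comp_hasDerivAt t hyd
      simp [toDual_apply_apply, hg] at h ⊢; exact h
    have hc : HasDerivAt (fun s : ℝ => (κ / 3) * s ^ 3) (κ * t ^ 2) t := by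
      have h := (hasDerivAt_pow 3 t).const_mul (κ / 3)
      exact h.congr_deriv (by simp only [Nat.cast_ofNat, show (3:ℕ) - 1 = 2 from rfl]; ring)
    have hterm1 : HasDerivAt (fun s => (κ / 3) * s ^ 3 * (f (y s) - f xs))
        ((κ * t ^ 2) * (f (y t) - f xs)
          + (κ / 3) * t ^ 3 * ⟪g t, -((κ * t ^ 2) • g t)⟫_ℝ) t :=
      hc.mul (hF.sub_const (f xs))
    have hinner : HasDerivAt (fun s => ⟪y s - xs, y s - xs⟫_ℝ)
        (⟪y t - xs, -((κ * t ^ 2) • g t)⟫_ℝ + ⟪-((κ * t ^ 2) • g t), y t - xs⟫_ℝ) t :=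
      (hyd.sub_const xs).inner ℝ (hyd.sub_const xs)
    have hterm2 := hinner.const_mul (1 / 2)
    have := hterm1.add hterm2
    refine this.congr_deriv ?_
    rw [real_inner_comm (y t - xs)]
    ring
  -- derivative nonpositive
  have hDnonpos : ∀ t, t0 ≤ t →
      (κ * t ^ 2) * (f (y t) - f xs)
        + (κ / 3) * t ^ 3 * ⟪g t, -((κ * t ^ 2) • g t)⟫_ℝ
        + ⟪y t - xs, -((κ * t ^ 2) • g t)⟫_ℝ ≤ 0 := by
    intro t ht
    have htpos : 0 < t := lt_of_lt_of_le ht0 ht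
    have hGI := grad_ineq f hconv hdiff (y t) xs
    -- ⟪g t, xs - y t⟫ ≤ f xs - f (y t)
    have h1 : f (y t) - f xs ≤ ⟪g t, y t - xs⟫_ℝ := by
      have : ⟪g t, xs - y t⟫_ℝ = -⟪g t, y t - xs⟫_ℝ := by
        rw [← inner_neg_right]; simp
      rw [hg]; linarith [hGI, this ▸ hGI]
    have h2 : (0:ℝ) ≤ ⟪g t, g t⟫_ℝ := real_inner_self_nonneg
    rw [inner_neg_right, inner_neg_right, real_inner_smul_right, real_inner_smul_right,
      real_inner_comm (y t - xs) (g t)] at *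
    have hk2 : 0 < κ * t ^ 2 := mul_pos hκpos (pow_pos htpos 2)
    have hk3 : 0 ≤ (κ / 3) * t ^ 3 := by positivity
    nlinarith [mul_le_mul_of_nonneg_left h1 hk2.le, mul_nonneg hk3 (mul_nonneg hk2.le h2)]
  -- E is antitone on [t0, ∞)
  have hanti : AntitoneOn E (Set.Ici t0) := by
    apply antitoneOn_of_deriv_nonpos (convex_Ici t0)
    · intro t ht
      exact (hEderiv t ht).continuousAt.continuousWithinAt
    · intro t ht
      rw [interior_Ici] at ht
      exact (hEderiv t (le_of_lt ht)).differentiableAt.differentiableWithinAt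
    · intro t ht
      rw [interior_Ici] at ht
      rw [(hEderiv t (le_of_lt ht)).deriv]
      exact hDnonpos t (le_of_lt ht)
  refine ⟨3 * E t0 / κ + 1, ?_, ?_⟩
  · have hE0 : 0 ≤ E t0 := by
      have h1 : 0 ≤ f (y t0) - f xs := by linarith [hmin (y t0)]
      have h2 : (0:ℝ) ≤ ⟪y t0 - xs, y t0 - xs⟫_ℝ := real_inner_self_nonneg
      have : 0 ≤ (κ / 3) * t0 ^ 3 := by positivity
      rw [hE]; nlinarith
    positivity
  · intro t ht
    have htpos : 0 < t := lt_of_lt_of_le ht0 ht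
    have hEle : E t ≤ E t0 := hanti (Set.self_mem_Ici) ht ht
    have hlow : (κ / 3) * t ^ 3 * (f (y t) - f xs) ≤ E t := by
      have h2 : (0:ℝ) ≤ ⟪y t - xs, y t - xs⟫_ℝ := real_inner_self_nonneg
      rw [hE]; nlinarith
    show f (y t) - f xs ≤ (3 * E t0 / κ + 1) / t ^ 3
    have h3 : (0:ℝ) < t ^ 3 := pow_pos htpos 3
    have key : κ / 3 * t ^ 3 * (f (y t) - f xs) ≤ E t0 := hlow.trans hEle
    have hκ' : κ ≠ 0 := ne_of_gt hκpos
    have hFt : (f (y t) - f xs) * t ^ 3 ≤ 3 * E t0 / κ := by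
      have hcalc : (f (y t) - f xs) * t ^ 3
          = (3 / κ) * (κ / 3 * t ^ 3 * (f (y t) - f xs)) := by
        field_simp
      rw [hcalc]
      calc (3 / κ) * (κ / 3 * t ^ 3 * (f (y t) - f xs))
          ≤ (3 / κ) * E t0 := by
            apply mul_le_mul_of_nonneg_left key (by positivity)
        _ = 3 * E t0 / κ := by ring
    rw [le_div_iff₀ h3]
    linarith
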